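/- Let γ, l > 0 and let D_{γ,l} be the self-adjoint operator on L²(0,l) acting as f ↦ −f'' with domain {f ∈ H²(0,l) : −f'(0) − γ f(0) = 0 and f(l) = 0}. Then D_{γ,l} has a negative eigenvalue if and only if γ l > 1, and in that case the negative eigenvalue is unique. -/

import Mathlib

/-- `E` is an eigenvalue of the operator `f ↦ −f''` on `(0,l)` with Robin condition
`−f'(0) − γ f(0) = 0` at the left endpoint and Dirichlet condition `f(l) = 0` at the
right endpoint, in the classical sense. -/
def IsRobinDirichletEigenvalue (γ l E : ℝ) : Prop :=
  ∃ f : ℝ → ℝ, ContDiff ℝ 2 f ∧ (∃ x ∈ Set.Icc 0 l, f x ≠ 0) ∧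
    (∀ x ∈ Set.Icc 0 l, -(deriv (deriv f) x) = E * f x) ∧
    -(deriv f 0) - γ * f 0 = 0 ∧ f l = 0

open Real

lemma myHasDerivAt_tanh (x : ℝ) : HasDerivAt Real.tanh (1 / Real.cosh x ^ 2) x := by
  have h := (Real.hasDerivAt_sinh x).div (Real.hasDerivAt_cosh x) (Real.cosh_pos x).ne'
  have he : Real.tanh = fun y => Real.sinh y / Real.cosh y :=
    funext fun y => Real.tanh_eq_sinh_div_cosh y
  rw [he]
  refine h.congr_deriv ?_
  have := Real.cosh_sq_sub_sinh_sq x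
  congr 1
  nlinarith [this]

lemma tanh_lt_self {t : ℝ} (ht : 0 < t) : Real.tanh t < t := by
  have key : ∀ s ∈ Set.Ici (0:ℝ), HasDerivAt (fun y => y * Real.cosh y - Real.sinh y)
      (s * Real.sinh s) s := by
    intro s _
    have h := ((hasDerivAt_id s).mul (Real.hasDerivAt_cosh s)).sub (Real.hasDerivAt_sinh s)
    exact h.congr_deriv (by simp only [id, one_mul]; ring)
  have hmono : StrictMonoOn (fun y => y * Real.cosh y - Real.sinh y) (Set.Ici 0) := by
    apply strictMonoOn_of_deriv_pos (convex_Ici 0)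
    · exact (((continuous_id.mul Real.continuous_cosh).sub Real.continuous_sinh)).continuousOn
    · intro s hs
      rw [interior_Ici] at hs
      rw [(key s (Set.mem_Ici.mpr (le_of_lt hs))).deriv]
      exact mul_pos hs (by rwa [Real.sinh_pos_iff])
  have h0 : (0:ℝ) * Real.cosh 0 - Real.sinh 0 < t * Real.cosh t - Real.sinh t :=
    hmono (Set.self_mem_Ici) (le_of_lt ht) ht
  simp at h0
  rw [Real.tanh_eq_sinh_div_cosh, div_lt_iff₀ (Real.cosh_pos t)]
  linarith

lemma tanh_lt_one' (x : ℝ) : Real.tanh x < 1 := by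
  rw [Real.tanh_eq_sinh_div_cosh, div_lt_one (Real.cosh_pos x)]
  rw [Real.sinh_eq, Real.cosh_eq]
  have := Real.exp_pos (-x)
  linarith


section roots
variable {γ l : ℝ}

lemma g_hasDeriv (hγ : 0 < γ) (hl : 0 < l) (k : ℝ) :
    HasDerivAt (fun k => γ * Real.tanh (k * l) - k) (γ * (l / Real.cosh (k * l) ^ 2) - 1) k := by
  have hin : HasDerivAt (fun k : ℝ => k * l) l k := by
    simpa using (hasDerivAt_id k).mul_const l
  have h := ((myHasDerivAt_tanh (k * l)).comp k hin).const_mul γ |>.sub (hasDerivAt_id k)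
  exact h.congr_deriv (by ring)

lemma g_cont : Continuous fun k : ℝ => γ * Real.tanh (k * l) - k := by
  have : Continuous Real.tanh := by
    have he : Real.tanh = fun y => Real.sinh y / Real.cosh y :=
      funext fun y => Real.tanh_eq_sinh_div_cosh y
    rw [he]
    exact Real.continuous_sinh.div Real.continuous_cosh fun x => (Real.cosh_pos x).ne'
  fun_prop

lemma g_strictConcave (hγ : 0 < γ) (hl : 0 < l) :
    StrictConcaveOn ℝ (Set.Ici 0) (fun k => γ * Real.tanh (k * l) - k) := by
  apply StrictAntiOn.strictConcaveOn_of_deriv (convex_Ici 0) g_cont.continuousOn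
  intro a ha b hb hab
  rw [interior_Ici] at ha hb
  rw [(g_hasDeriv hγ hl a).deriv, (g_hasDeriv hγ hl b).deriv]
  have hcc : Real.cosh (a * l) < Real.cosh (b * l) := by
    rw [Real.cosh_lt_cosh, abs_of_pos (mul_pos ha hl), abs_of_pos (mul_pos (ha.trans hab) hl)]
    exact mul_lt_mul_of_pos_right hab hl
  have h2 : Real.cosh (a * l) ^ 2 < Real.cosh (b * l) ^ 2 := by
    nlinarith [Real.cosh_pos (a * l), Real.cosh_pos (b * l)]
  have : l / Real.cosh (b * l) ^ 2 < l / Real.cosh (a * l) ^ 2 :=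
    div_lt_div_of_pos_left hl (by positivity) h2
  nlinarith

lemma root_unique (hγ : 0 < γ) (hl : 0 < l) {k₁ k₂ : ℝ} (h1 : 0 < k₁) (h2 : 0 < k₂)
    (e1 : γ * Real.tanh (k₁ * l) = k₁) (e2 : γ * Real.tanh (k₂ * l) = k₂) : k₁ = k₂ := by
  by_contra hne
  wlog hlt : k₁ < k₂ generalizing k₁ k₂
  · exact this h2 h1 e2 e1 (Ne.symm hne) (lt_of_le_of_ne (not_lt.mp hlt) (Ne.symm hne))
  have hpt : (1 - k₁ / k₂) • (0:ℝ) + (k₁ / k₂) • k₂ = k₁ := by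
    field_simp
    simp
    exact div_mul_cancel₀ k₁ h2.ne'
  have hb : (0:ℝ) < k₁ / k₂ := div_pos h1 h2
  have ha : (0:ℝ) < 1 - k₁ / k₂ := by
    have : k₁ / k₂ < 1 := (div_lt_one h2).mpr hlt
    linarith
  have key := (g_strictConcave hγ hl).2 Set.self_mem_Ici (Set.mem_Ici.mpr h2.le)
    (by linarith : (0:ℝ) ≠ k₂) ha hb (by ring)
  rw [hpt] at key
  simp only [smul_eq_mul] at key
  rw [zero_mul, Real.tanh_zero, e1, e2] at key
  simp at key

lemma no_root (hγ : 0 < γ) (hl : 0 < l) (h : γ * l ≤ 1) {k : ℝ} (hk : 0 < k)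
    (e : γ * Real.tanh (k * l) = k) : False := by
  have h1 : Real.tanh (k * l) < k * l := tanh_lt_self (mul_pos hk hl)
  nlinarith

lemma root_exists (hγ : 0 < γ) (hl : 0 < l) (h : 1 < γ * l) :
    ∃ k, 0 < k ∧ γ * Real.tanh (k * l) = k := by
  set g := fun k : ℝ => γ * Real.tanh (k * l) - k with hg
  -- g has positive value at some small point
  have hd : HasDerivAt g (γ * l - 1) 0 := by
    have := g_hasDeriv hγ hl (γ := γ) (l := l) 0
    simpa using this
  have hslope : Filter.Tendsto (slope g 0) (nhdsWithin 0 {(0:ℝ)}ᶜ) (nhds (γ * l - 1)) :=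
    hasDerivAt_iff_tendsto_slope.mp hd
  have hle : nhdsWithin (0:ℝ) (Set.Ioi 0) ≤ nhdsWithin 0 {(0:ℝ)}ᶜ :=
    nhdsWithin_mono 0 (fun x hx => ne_of_gt hx)
  have hev : ∀ᶠ x in nhdsWithin (0:ℝ) (Set.Ioi 0), 0 < slope g 0 x :=
    (hslope.mono_left hle).eventually (eventually_gt_nhds (by linarith))
  have hev2 : ∀ᶠ x in nhdsWithin (0:ℝ) (Set.Ioi 0), x < γ + 1 :=
    eventually_nhdsWithin_of_eventually_nhds (eventually_lt_nhds (by linarith))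
  have hev3 : ∀ᶠ x in nhdsWithin (0:ℝ) (Set.Ioi 0), x ∈ Set.Ioi (0:ℝ) :=
    eventually_mem_nhdsWithin
  obtain ⟨k₀, hk₀s, hk₀lt, hk₀pos⟩ := (hev.and (hev2.and hev3)).exists
  have hk₀pos' : (0:ℝ) < k₀ := hk₀pos
  have hgk₀ : 0 < g k₀ := by
    have : slope g 0 k₀ = g k₀ / k₀ := by
      simp [slope, hg, Real.tanh_zero]
      ring
    rw [this] at hk₀s
    have := mul_pos hk₀s hk₀pos'
    rwa [div_mul_cancel₀] at this
    exact hk₀pos'.ne'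
  have hgK : g (γ + 1) < 0 := by
    have h1 : Real.tanh ((γ + 1) * l) < 1 := tanh_lt_one' _
    simp only [hg]
    nlinarith
  have hcont : ContinuousOn g (Set.Icc k₀ (γ + 1)) := g_cont.continuousOn
  have hsub := intermediate_value_Icc' (le_of_lt hk₀lt) hcont
  have : (0:ℝ) ∈ Set.Icc (g (γ + 1)) (g k₀) := ⟨hgK.le, hgk₀.le⟩
  obtain ⟨c, hc, hgc⟩ := hsub this
  refine ⟨c, lt_of_lt_of_le hk₀pos' hc.1, ?_⟩
  have : γ * Real.tanh (c * l) - c = 0 := hgc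
  linarith
end roots
lemma forward_eigen {γ l E : ℝ} (hγ : 0 < γ) (hl : 0 < l) (hE : E < 0)
    (h : IsRobinDirichletEigenvalue γ l E) :
    γ * Real.tanh (Real.sqrt (-E) * l) = Real.sqrt (-E) := by
  obtain ⟨f, hf, ⟨x₀, hx₀, hfx₀⟩, hode, hrobin, hfl⟩ := h
  set k := Real.sqrt (-E) with hkdef
  have hk : 0 < k := Real.sqrt_pos.mpr (by linarith)
  have hk2 : k ^ 2 = -E := Real.sq_sqrt (by linarith)
  have hode' : ∀ x ∈ Set.Icc 0 l, deriv (deriv f) x = k ^ 2 * f x := by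
    intro x hx
    have := hode x hx
    rw [hk2]
    linarith
  -- regularity
  have hf11 : ContDiff ℝ (1 + 1) f := by
    convert hf using 2
    norm_num
  obtain ⟨hdf, -, hcd1⟩ := contDiff_succ_iff_deriv.mp hf11
  have hddf : Differentiable ℝ (deriv f) := hcd1.differentiable one_ne_zero
  have hcdf : Continuous (deriv f) := hddf.continuous
  have hcf : Continuous f := hdf.continuous
  -- the two first-order combinations
  set u := fun x => Real.exp (-k * x) * (deriv f x + k * f x) with hu
  set v := fun x => Real.exp (k * x) * (deriv f x - k * f x) with hv
  have hexp1 : ∀ x : ℝ, HasDerivAt (fun x => Real.exp (-k * x)) (Real.exp (-k * x) * (-k)) x := by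
    intro x
    simpa using (((hasDerivAt_id x).const_mul (-k)).exp)
  have hexp2 : ∀ x : ℝ, HasDerivAt (fun x => Real.exp (k * x)) (Real.exp (k * x) * k) x := by
    intro x
    simpa using (((hasDerivAt_id x).const_mul k).exp)
  have husum : ∀ x : ℝ, HasDerivAt (fun x => deriv f x + k * f x)
      (deriv (deriv f) x + k * deriv f x) x := by
    intro x
    exact ((hddf x).hasDerivAt).add (((hdf x).hasDerivAt).const_mul k)
  have hvsum : ∀ x : ℝ, HasDerivAt (fun x => deriv f x - k * f x)
      (deriv (deriv f) x - k * deriv f x) x := by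
    intro x
    exact ((hddf x).hasDerivAt).sub (((hdf x).hasDerivAt).const_mul k)
  have hu_deriv : ∀ x ∈ Set.Icc 0 l, HasDerivAt u 0 x := by
    intro x hx
    have hh := (hexp1 x).mul (husum x)
    rw [hode' x hx] at hh
    exact hh.congr_deriv (by ring)
  have hv_deriv : ∀ x ∈ Set.Icc 0 l, HasDerivAt v 0 x := by
    intro x hx
    have hh := (hexp2 x).mul (hvsum x)
    rw [hode' x hx] at hh
    exact hh.congr_deriv (by ring)
  have hucont : Continuous u := by fun_prop
  have hvcont : Continuous v := by fun_prop
  have huconst : ∀ x ∈ Set.Icc 0 l, u x = u 0 :=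
    constant_of_has_deriv_right_zero hucont.continuousOn
      (fun x hx => (hu_deriv x ⟨hx.1, hx.2.le⟩).hasDerivWithinAt)
  have hvconst : ∀ x ∈ Set.Icc 0 l, v x = v 0 :=
    constant_of_has_deriv_right_zero hvcont.continuousOn
      (fun x hx => (hv_deriv x ⟨hx.1, hx.2.le⟩).hasDerivWithinAt)
  set a := deriv f 0 + k * f 0 with ha
  set b := deriv f 0 - k * f 0 with hb
  have hu0 : u 0 = a := by simp [hu, ha]
  have hv0 : v 0 = b := by simp [hv, hb]
  -- explicit form of f on [0,l]
  have hform : ∀ x ∈ Set.Icc 0 l,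
      2 * k * f x = a * Real.exp (k * x) - b * Real.exp (-k * x) := by
    intro x hx
    have h1 : Real.exp (-k * x) * (deriv f x + k * f x) = a := (huconst x hx).trans hu0
    have h2 : Real.exp (k * x) * (deriv f x - k * f x) = b := (hvconst x hx).trans hv0
    have hee : Real.exp (-k * x) * Real.exp (k * x) = 1 := by
      rw [← Real.exp_add]
      norm_num
    have e1 : deriv f x + k * f x = a * Real.exp (k * x) := by
      have h := congrArg (fun t => Real.exp (k * x) * t) h1
      rw [← mul_assoc, mul_comm (Real.exp (k * x)) (Real.exp (-k * x)), hee, one_mul] at h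
      rw [h]; ring
    linear_combination e1 - Real.exp (-k * x) * h2 + (deriv f x - k * f x) * hee
  -- boundary conditions
  have hA := hform l (Set.right_mem_Icc.mpr hl.le)
  rw [hfl] at hA
  have hx0form := hform x₀ hx₀
  -- Robin condition gives deriv f 0 = -γ * f 0
  have hdf0 : deriv f 0 = -γ * f 0 := by linarith
  -- b ≠ 0
  have hbne : b ≠ 0 := by
    intro hb0
    have ha0 : a = 0 := by
      have he1 := Real.exp_pos (k * l)
      rw [hb0] at hA
      have h' : a * Real.exp (k * l) = 0 := by linarith
      exact (mul_eq_zero.mp h').resolve_right he1.ne'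
    rw [ha0, hb0] at hx0form
    have h' : (2 * k) * f x₀ = 0 := by linarith
    rcases mul_eq_zero.mp h' with h'' | h''
    · linarith
    · exact hfx₀ h''
  have hf0ne : f 0 ≠ 0 := by
    intro h0
    apply hbne
    rw [hb, hdf0, h0]
    ring
  -- transcendental equation
  have hAB : (γ - k) * Real.exp (k * l) = (γ + k) * Real.exp (-k * l) := by
    have haval : a = (k - γ) * f 0 := by rw [ha, hdf0]; ring
    have hbval : b = -(γ + k) * f 0 := by rw [hb, hdf0]; ring
    rw [haval, hbval] at hA
    have hzero : f 0 * ((k - γ) * Real.exp (k * l) + (γ + k) * Real.exp (-k * l)) = 0 := by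
      linear_combination -hA
    have hz := (mul_eq_zero.mp hzero).resolve_left hf0ne
    linarith
  rw [Real.tanh_eq_sinh_div_cosh, Real.sinh_eq, Real.cosh_eq]
  rw [show -k * l = -(k * l) from by ring] at hAB
  have hc : (0:ℝ) < Real.exp (k * l) + Real.exp (-(k * l)) := by positivity
  field_simp
  linear_combination hAB
lemma construct_eigen {γ l k : ℝ} (hγ : 0 < γ) (hl : 0 < l) (hk : 0 < k)
    (e : γ * Real.tanh (k * l) = k) : IsRobinDirichletEigenvalue γ l (-(k ^ 2)) := by
  refine ⟨fun x => Real.sinh (k * (l - x)), ?_, ?_, ?_, ?_, ?_⟩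
  case _ =>
    exact Real.contDiff_sinh.comp (contDiff_const.mul (contDiff_const.sub contDiff_id))
  case _ =>
    refine ⟨0, Set.left_mem_Icc.mpr hl.le, ?_⟩
    simp only [sub_zero]
    exact ne_of_gt (Real.sinh_pos_iff.mpr (mul_pos hk hl))
  all_goals
    have hin : ∀ x : ℝ, HasDerivAt (fun y : ℝ => k * (l - y)) (-k) x := by
      intro x
      have := ((hasDerivAt_const x l).sub (hasDerivAt_id x)).const_mul k
      simpa using this
    have hd1 : deriv (fun x => Real.sinh (k * (l - x))) =
        fun x => -k * Real.cosh (k * (l - x)) := by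
      funext x
      have := (hin x).sinh
      rw [this.deriv]; ring
  case _ =>
    intro x _
    rw [hd1]
    have hd2 : deriv (fun x => -k * Real.cosh (k * (l - x))) x
        = k ^ 2 * Real.sinh (k * (l - x)) := by
      have := ((hin x).cosh).const_mul (-k)
      rw [this.deriv]; ring
    rw [hd2]; ring
  case _ =>
    rw [hd1]
    simp only [sub_zero]
    have ht := Real.tanh_eq_sinh_div_cosh (k * l)
    have hc := Real.cosh_pos (k * l)
    rw [ht] at e
    field_simp at e
    nlinarith [e]
  case _ =>
    simp

/-- (Proposition 2.2, first part.)  The operator `D_{γ,l}` has a negative eigenvalue if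
and only if `γ l > 1`, and in that case the negative eigenvalue is unique. -/
theorem stmt_7 (γ l : ℝ) (hγ : 0 < γ) (hl : 0 < l) :
    ((∃ E < (0 : ℝ), IsRobinDirichletEigenvalue γ l E) ↔ 1 < γ * l) ∧
    (1 < γ * l → ∃! E : ℝ, E < 0 ∧ IsRobinDirichletEigenvalue γ l E) := by
  constructor
  · constructor
    · rintro ⟨E, hE, heig⟩
      by_contra hle
      push_neg at hle
      have hk : 0 < Real.sqrt (-E) := Real.sqrt_pos.mpr (by linarith)
      exact no_root hγ hl hle hk (forward_eigen hγ hl hE heig)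
    · intro h
      obtain ⟨k, hk, hke⟩ := root_exists hγ hl h
      exact ⟨-(k ^ 2), neg_lt_zero.mpr (by positivity), construct_eigen hγ hl hk hke⟩
  · intro h
    obtain ⟨k, hk, hke⟩ := root_exists hγ hl h
    refine ⟨-(k ^ 2), ⟨neg_lt_zero.mpr (by positivity), construct_eigen hγ hl hk hke⟩, ?_⟩
    rintro E ⟨hE, heig⟩
    have hk' : 0 < Real.sqrt (-E) := Real.sqrt_pos.mpr (by linarith)
    have he' := forward_eigen hγ hl hE heig
    have := root_unique hγ hl hk' hk he' hke
    have hsq : Real.sqrt (-E) ^ 2 = -E := Real.sq_sqrt (by linarith)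
    rw [this] at hsq
    linarith
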